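/- Let ρ, σ be quantum states on ℂ^N. Then Σ_{i,j} min(aᵢ, bⱼ)·|⟨aᵢ|bⱼ⟩|² ≥ 1 − √(‖ρ−σ‖₁ − (1/4)‖ρ−σ‖₁²), where ρ = Σᵢaᵢ|aᵢ⟩⟨aᵢ| and σ = Σⱼbⱼ|bⱼ⟩⟨bⱼ| are eigen-decompositions. -/

import Mathlib

open Matrix
open scoped Kronecker ComplexOrder

noncomputable section

def mfun {n : Type*} [Fintype n] [DecidableEq n] (f : ℝ → ℝ) (A : Matrix n n ℂ) : Matrix n n ℂ :=
  if h : A.IsHermitian then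
    h.eigenvectorUnitary.1 * Matrix.diagonal (fun i => (f (h.eigenvalues i) : ℂ)) *
      (star h.eigenvectorUnitary.1)
  else 0

def psqrt {n : Type*} [Fintype n] [DecidableEq n] (A : Matrix n n ℂ) : Matrix n n ℂ :=
  mfun Real.sqrt A

def mlog {n : Type*} [Fintype n] [DecidableEq n] (A : Matrix n n ℂ) : Matrix n n ℂ :=
  mfun Real.log A

def traceNorm {n : Type*} [Fintype n] [DecidableEq n] (A : Matrix n n ℂ) : ℝ :=
  ((psqrt (Aᴴ * A)).trace).re

def fid {n : Type*} [Fintype n] [DecidableEq n] (ρ σ : Matrix n n ℂ) : ℝ :=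
  traceNorm (psqrt ρ * psqrt σ)

def vNEntropy {n : Type*} [Fintype n] [DecidableEq n] (A : Matrix n n ℂ) : ℝ :=
  - ((A * mlog A).trace).re

def relEnt {n : Type*} [Fintype n] [DecidableEq n] (ρ σ : Matrix n n ℂ) : ℝ :=
  ((ρ * mlog ρ).trace - (ρ * mlog σ).trace).re


set_option linter.unusedSectionVars false

namespace S16
variable {n : Type*} [Fintype n] [DecidableEq n]

lemma vecMulVec_mul_vecMulVec (u v w x : n → ℂ) :
    vecMulVec u v * vecMulVec w x = (v ⬝ᵥ w) • vecMulVec u x := by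
  ext k l
  simp only [mul_apply, vecMulVec_apply, Matrix.smul_apply, dotProduct, smul_eq_mul, Finset.sum_mul]
  refine Finset.sum_congr rfl fun m _ => by ring

lemma trace_vecMulVec (u v : n → ℂ) : (vecMulVec u v).trace = v ⬝ᵥ u := by
  simp [trace, Matrix.diag, vecMulVec_apply, dotProduct, mul_comm]

lemma vecMulVec_hermitian (u : n → ℂ) : (vecMulVec u (star u)).IsHermitian := by
  ext k l
  simp [conjTranspose_apply, vecMulVec_apply, mul_comm]

lemma star_dotProduct_comm (u x : n → ℂ) : star x ⬝ᵥ u = star (star u ⬝ᵥ x) := by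
  simp only [dotProduct, star_sum, star_mul', star_star, Pi.star_apply]
  refine Finset.sum_congr rfl fun m _ => by ring

lemma vecMulVec_posSemidef (u : n → ℂ) : (vecMulVec u (star u)).PosSemidef := by
  refine .of_dotProduct_mulVec_nonneg (vecMulVec_hermitian u) fun x => ?_
  have h1 : vecMulVec u (star u) *ᵥ x = (star u ⬝ᵥ x) • u := by
    ext k; simp [mulVec, vecMulVec_apply, dotProduct, Finset.mul_sum, mul_comm, mul_left_comm]
  rw [h1]
  have h2 : star x ⬝ᵥ ((star u ⬝ᵥ x) • u) = (star u ⬝ᵥ x) * (star x ⬝ᵥ u) := by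
    simp [dotProduct_smul, mul_comm]
  rw [h2, star_dotProduct_comm]
  exact star_mul_self_nonneg (star x ⬝ᵥ u)


open scoped MatrixOrder in
lemma psqrt_eq {A : Matrix n n ℂ} (hA : A.PosSemidef) : psqrt A = CFC.sqrt A := by
  unfold psqrt mfun
  rw [dif_pos hA.1]
  rw [CFC.sqrt_eq_cfc, cfc_nnreal_eq_real _ A, hA.1.cfc_eq, IsHermitian.cfc,
    Unitary.conjStarAlgAut_apply]
  simp only [Function.comp_def, Real.coe_sqrt, Real.coe_toNNReal',
    max_eq_left (hA.eigenvalues_nonneg _)]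
  rfl

lemma conj_mul_conj (V D E : Matrix n n ℂ) (hV : star V * V = 1) :
    (V * D * star V) * (V * E * star V) = V * (D * E) * star V := by
  simp only [Matrix.mul_assoc]
  rw [← Matrix.mul_assoc (star V) V, hV, Matrix.one_mul]

lemma trace_conj (V M : Matrix n n ℂ) (hV : star V * V = 1) :
    (V * M * star V).trace = M.trace := by
  rw [Matrix.trace_mul_cycle, hV, Matrix.one_mul]

lemma trace_mul_diag (M : Matrix n n ℂ) (d : n → ℂ) :
    (M * diagonal d).trace = ∑ k, M k k * d k := by
  simp [Matrix.trace, Matrix.diag, Matrix.mul_apply, Matrix.diagonal, mul_ite]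

lemma trace_diag_mul (M : Matrix n n ℂ) (d : n → ℂ) :
    (diagonal d * M).trace = ∑ k, d k * M k k := by
  simp [Matrix.trace, Matrix.diag, Matrix.mul_apply, Matrix.diagonal, ite_mul]

lemma spectral' {A : Matrix n n ℂ} (hA : A.IsHermitian) :
    A = hA.eigenvectorUnitary.1 * diagonal (fun i => (hA.eigenvalues i : ℂ)) *
      star hA.eigenvectorUnitary.1 :=
  hA.spectral_theorem

lemma diag_conj_eq {A : Matrix n n ℂ} (hA : A.IsHermitian) :
    star hA.eigenvectorUnitary.1 * A * hA.eigenvectorUnitary.1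
      = diagonal (fun i => (hA.eigenvalues i : ℂ)) :=
  by
    have := hA.conjStarAlgAut_star_eigenvectorUnitary
    simpa [Unitary.conjStarAlgAut_star_apply, Function.comp_def] using this

lemma psd_diag_re_nonneg {M : Matrix n n ℂ} (hM : M.PosSemidef) (k : n) : 0 ≤ (M k k).re := by
  have h := hM.dotProduct_mulVec_nonneg (Pi.single k 1)
  have he : star (Pi.single k 1) ⬝ᵥ (M *ᵥ Pi.single k 1) = M k k := by
    simp [dotProduct, mulVec, Pi.single_apply, Finset.sum_ite_eq]
  rw [he] at h
  exact (Complex.le_def.mp h).1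


lemma star_V_mul_V {A : Matrix n n ℂ} (hA : A.IsHermitian) :
    star hA.eigenvectorUnitary.1 * hA.eigenvectorUnitary.1 = 1 :=
  (Unitary.mem_iff.mp hA.eigenvectorUnitary.2).1

lemma normSq_eq_norm_sq (z : ℂ) : (Complex.normSq z : ℝ) = ‖z‖ ^ 2 := by
  rw [Complex.normSq_eq_norm_sq]

open scoped MatrixOrder in
lemma traceNorm_herm {A : Matrix n n ℂ} (hA : A.IsHermitian) :
    traceNorm A = ∑ i, |hA.eigenvalues i| := by
  have hV : star hA.eigenvectorUnitary.1 * hA.eigenvectorUnitary.1 = 1 := star_V_mul_V hA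
  have hAA : Aᴴ * A = hA.eigenvectorUnitary.1 *
      (diagonal (fun i => (hA.eigenvalues i : ℂ)) * diagonal (fun i => (hA.eigenvalues i : ℂ))) *
      star hA.eigenvectorUnitary.1 := by
    rw [hA.eq]
    conv_lhs => rw [spectral' hA]
    rw [conj_mul_conj _ _ _ hV]
  have hSpsd : (hA.eigenvectorUnitary.1 * diagonal (fun i => ((|hA.eigenvalues i| : ℝ) : ℂ)) *
      star hA.eigenvectorUnitary.1).PosSemidef := by
    have h0 : (0 : n → ℂ) ≤ fun i => ((|hA.eigenvalues i| : ℝ) : ℂ) := fun i =>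
      Complex.zero_le_real.mpr (abs_nonneg _)
    have := (Matrix.PosSemidef.diagonal h0).mul_mul_conjTranspose_same hA.eigenvectorUnitary.1
    simpa [Matrix.star_eq_conjTranspose] using this
  have hSsq : (hA.eigenvectorUnitary.1 * diagonal (fun i => ((|hA.eigenvalues i| : ℝ) : ℂ)) *
      star hA.eigenvectorUnitary.1) ^ 2 = Aᴴ * A := by
    rw [pow_two, conj_mul_conj _ _ _ hV, hAA]
    congr 2
    rw [diagonal_mul_diagonal, diagonal_mul_diagonal]
    ext i j
    rcases eq_or_ne i j with rfl | hij
    · simp only [diagonal_apply_eq]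
      rw [← Complex.ofReal_mul, ← Complex.ofReal_mul, ← abs_mul, abs_mul_self]
    · simp [diagonal_apply_ne _ hij]
  have hP : (Aᴴ * A).PosSemidef := Matrix.posSemidef_conjTranspose_mul_self A
  have heq : psqrt (Aᴴ * A) = hA.eigenvectorUnitary.1 *
      diagonal (fun i => ((|hA.eigenvalues i| : ℝ) : ℂ)) * star hA.eigenvectorUnitary.1 := by
    rw [psqrt_eq hP, ← hSsq, CFC.sqrt_sq _ hSpsd.nonneg]
  rw [traceNorm, heq, trace_conj _ _ hV, trace_diagonal, Complex.re_sum]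
  exact Finset.sum_congr rfl fun i _ => Complex.ofReal_re _

lemma unitary_row_sum {X : Matrix n n ℂ} (hX : X * star X = 1) (k : n) :
    ∑ j, ‖X k j‖ ^ 2 = 1 := by
  have h : (X * star X) k k = 1 := by rw [hX]; simp
  have h2 : ∑ j, X k j * star (X k j) = 1 := by
    simpa [Matrix.mul_apply, Matrix.star_apply] using h
  have h3 := congrArg Complex.re h2
  rw [Complex.re_sum] at h3
  simp only [Complex.one_re] at h3
  calc ∑ j, ‖X k j‖ ^ 2 = ∑ j, (X k j * star (X k j)).re := by
        refine Finset.sum_congr rfl fun j _ => ?_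
        rw [show star (X k j) = starRingEnd ℂ (X k j) from rfl, Complex.mul_conj,
          Complex.ofReal_re, normSq_eq_norm_sq]
    _ = 1 := h3

/-- Re tr((W diag(s) W*) A) ≤ Σ|λ(A)| for Hermitian A and |s| ≤ 1. -/
lemma key_bound {A : Matrix n n ℂ} (hA : A.IsHermitian) (W : Matrix n n ℂ)
    (hW1 : W * star W = 1) (s : n → ℝ) (hs : ∀ j, |s j| ≤ 1) :
    (((W * diagonal (fun j => (s j : ℂ)) * star W) * A).trace).re ≤ ∑ i, |hA.eigenvalues i| := by
  have hV : star hA.eigenvectorUnitary.1 * hA.eigenvectorUnitary.1 = 1 := star_V_mul_V hA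
  obtain ⟨X, hXdef⟩ : ∃ X, X = star hA.eigenvectorUnitary.1 * W := ⟨_, rfl⟩
  have hX : X * star X = 1 := by
    rw [hXdef, Matrix.star_mul, star_star, Matrix.mul_assoc, ← Matrix.mul_assoc W,
      hW1, Matrix.one_mul]
    exact hV
  obtain ⟨Y, hYdef⟩ : ∃ Y, Y = X * diagonal (fun j => (s j : ℂ)) * star X := ⟨_, rfl⟩
  have hstep : ((W * diagonal (fun j => (s j : ℂ)) * star W) * A).trace
      = (Y * diagonal (fun i => (hA.eigenvalues i : ℂ))).trace := by
    nth_rewrite 1 [spectral' hA]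
    rw [show (W * diagonal (fun j => (s j : ℂ)) * star W) *
        (hA.eigenvectorUnitary.1 * diagonal (fun i => (hA.eigenvalues i : ℂ)) *
          star hA.eigenvectorUnitary.1)
        = ((W * diagonal (fun j => (s j : ℂ)) * star W) * hA.eigenvectorUnitary.1 *
            diagonal (fun i => (hA.eigenvalues i : ℂ))) * star hA.eigenvectorUnitary.1 by
      simp only [Matrix.mul_assoc]]
    rw [Matrix.trace_mul_comm, ← Matrix.mul_assoc, ← Matrix.mul_assoc]
    congr 2
    rw [hYdef, hXdef, Matrix.star_mul, star_star]
    simp only [Matrix.mul_assoc]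
  rw [hstep, trace_mul_diag, Complex.re_sum]
  have hentry : ∀ k, (Y k k).re = ∑ j, s j * ‖X k j‖ ^ 2 := by
    intro k
    have he : Y k k = ∑ j, (s j : ℂ) * (X k j * star (X k j)) := by
      rw [hYdef, Matrix.mul_apply]
      refine Finset.sum_congr rfl fun j _ => ?_
      rw [Matrix.mul_diagonal, Matrix.star_apply]
      ring
    rw [he, Complex.re_sum]
    refine Finset.sum_congr rfl fun j _ => ?_
    rw [show star (X k j) = starRingEnd ℂ (X k j) from rfl, Complex.mul_conj,
      show ((s j : ℂ) * (Complex.normSq (X k j) : ℝ)) = ((s j * Complex.normSq (X k j) : ℝ) : ℂ)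
        by push_cast; ring,
      Complex.ofReal_re, normSq_eq_norm_sq]
  have habs : ∀ k, |(Y k k).re| ≤ 1 := by
    intro k
    rw [hentry k]
    calc |∑ j, s j * ‖X k j‖ ^ 2| ≤ ∑ j, |s j * ‖X k j‖ ^ 2| := Finset.abs_sum_le_sum_abs _ _
      _ ≤ ∑ j, ‖X k j‖ ^ 2 := by
          refine Finset.sum_le_sum fun j _ => ?_
          rw [abs_mul, abs_of_nonneg (by positivity : (0:ℝ) ≤ ‖X k j‖ ^ 2)]
          calc |s j| * ‖X k j‖ ^ 2 ≤ 1 * ‖X k j‖ ^ 2 := by gcongr; exact hs j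
            _ = ‖X k j‖ ^ 2 := one_mul _
      _ = 1 := unitary_row_sum hX k
  calc ∑ k, (Y k k * (hA.eigenvalues k : ℂ)).re
      = ∑ k, (Y k k).re * hA.eigenvalues k := by
        refine Finset.sum_congr rfl fun k _ => ?_
        rw [Complex.mul_re]
        simp
    _ ≤ ∑ k, |hA.eigenvalues k| := by
        refine Finset.sum_le_sum fun k _ => ?_
        calc (Y k k).re * hA.eigenvalues k ≤ |(Y k k).re * hA.eigenvalues k| := le_abs_self _
          _ = |(Y k k).re| * |hA.eigenvalues k| := abs_mul _ _
          _ ≤ 1 * |hA.eigenvalues k| := mul_le_mul_of_nonneg_right (habs k) (abs_nonneg _)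
          _ = |hA.eigenvalues k| := one_mul _


lemma psd_real_smul {M : Matrix n n ℂ} (hM : M.PosSemidef) {r : ℝ} (hr : 0 ≤ r) :
    ((r : ℂ) • M).PosSemidef := by
  refine .of_dotProduct_mulVec_nonneg ?_ ?_
  · have := hM.1
    rw [Matrix.IsHermitian, Matrix.conjTranspose_smul, hM.1.eq]
    congr 1
    simp
  · intro x
    rw [Matrix.smul_mulVec, dotProduct_smul, smul_eq_mul]
    exact mul_nonneg (Complex.zero_le_real.mpr hr) (hM.dotProduct_mulVec_nonneg x)

lemma psd_sum {ι : Type*} (t : Finset ι) (M : ι → Matrix n n ℂ)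
    (h : ∀ i ∈ t, (M i).PosSemidef) : (∑ i ∈ t, M i).PosSemidef := by
  classical
  induction t using Finset.induction_on with
  | empty => simpa using Matrix.PosSemidef.zero
  | insert _ _ hx ih =>
    rw [Finset.sum_insert hx]
    exact Matrix.PosSemidef.add (h _ (Finset.mem_insert_self _ _))
      (ih fun i hi => h i (Finset.mem_insert_of_mem hi))

/-- |Re tr((W diag(s) W*) R)| ≤ Re tr R for PSD R and |s| ≤ 1. -/
lemma key_bound_psd {R : Matrix n n ℂ} (hR : R.PosSemidef) (W : Matrix n n ℂ)
    (hW1 : W * star W = 1) (s : n → ℝ) (hs : ∀ j, |s j| ≤ 1) :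
    |(((W * diagonal (fun j => (s j : ℂ)) * star W) * R).trace).re| ≤ (R.trace).re := by
  have hstep : ((W * diagonal (fun j => (s j : ℂ)) * star W) * R).trace
      = (diagonal (fun j => (s j : ℂ)) * (star W * R * W)).trace := by
    rw [show (W * diagonal (fun j => (s j : ℂ)) * star W) * R
        = W * (diagonal (fun j => (s j : ℂ)) * (star W * R)) by simp only [Matrix.mul_assoc],
      Matrix.trace_mul_comm]
    simp only [Matrix.mul_assoc]
  have hG : (star W * R * W).PosSemidef := by
    have := hR.conjTranspose_mul_mul_same W
    simpa [Matrix.star_eq_conjTranspose] using this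
  have htrG : ((star W * R * W).trace).re = (R.trace).re := by
    rw [Matrix.trace_mul_cycle, hW1, Matrix.one_mul]
  rw [hstep, trace_diag_mul, Complex.re_sum]
  have hterm : ∀ k, ((s k : ℂ) * (star W * R * W) k k).re
      = s k * ((star W * R * W) k k).re := fun k => Complex.re_ofReal_mul _ _
  rw [show ∑ k, ((s k : ℂ) * (star W * R * W) k k).re
      = ∑ k, s k * ((star W * R * W) k k).re from Finset.sum_congr rfl fun k _ => hterm k]
  have hGkk : ∀ k, 0 ≤ ((star W * R * W) k k).re := fun k => psd_diag_re_nonneg hG k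
  calc |∑ k, s k * ((star W * R * W) k k).re|
      ≤ ∑ k, |s k * ((star W * R * W) k k).re| := Finset.abs_sum_le_sum_abs _ _
    _ ≤ ∑ k, ((star W * R * W) k k).re := by
        refine Finset.sum_le_sum fun k _ => ?_
        rw [abs_mul, abs_of_nonneg (hGkk k)]
        calc |s k| * ((star W * R * W) k k).re ≤ 1 * ((star W * R * W) k k).re := by
              exact mul_le_mul_of_nonneg_right (hs k) (hGkk k)
          _ = _ := one_mul _
    _ = (R.trace).re := by rw [← htrG, Matrix.trace, Complex.re_sum]; rfl


lemma smul_outer_mul_smul_outer (c d : ℂ) (u v : n → ℂ) :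
    (c • vecMulVec u (star u)) * (d • vecMulVec v (star v))
      = (c * d * (star u ⬝ᵥ v)) • vecMulVec u (star v) := by
  rw [Matrix.smul_mul, Matrix.mul_smul, vecMulVec_mul_vecMulVec, smul_smul, smul_smul]

lemma sum_smul_outer_mul {ι : Type*} [Fintype ι] [DecidableEq ι] (v : ι → n → ℂ)
    (hvo : ∀ i j, star (v i) ⬝ᵥ v j = if i = j then 1 else 0) (w u : ι → ℂ) :
    (∑ i, w i • vecMulVec (v i) (star (v i))) * (∑ j, u j • vecMulVec (v j) (star (v j)))
      = ∑ i, (w i * u i) • vecMulVec (v i) (star (v i)) := by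
  rw [Finset.sum_mul_sum]
  refine Finset.sum_congr rfl fun i _ => ?_
  have : ∀ j, (w i • vecMulVec (v i) (star (v i))) * (u j • vecMulVec (v j) (star (v j)))
      = if i = j then (w i * u i) • vecMulVec (v i) (star (v j)) else 0 := by
    intro j
    rw [smul_outer_mul_smul_outer, hvo i j]
    rcases eq_or_ne i j with rfl | hij
    · simp
    · simp [hij]
  rw [Finset.sum_congr rfl fun j _ => this j]
  simp

lemma trace_smul_outer_mul_smul_outer (c d : ℂ) (u v : n → ℂ) :
    ((c • vecMulVec u (star u)) * (d • vecMulVec v (star v))).trace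
      = c * d * ((star u ⬝ᵥ v) * star (star u ⬝ᵥ v)) := by
  rw [smul_outer_mul_smul_outer, Matrix.trace_smul, trace_vecMulVec, smul_eq_mul]
  rw [star_dotProduct_comm u v]
  ring

lemma herm_sum_smul_outer {ι : Type*} [Fintype ι] (v : ι → n → ℂ) (w : ι → ℝ) :
    (∑ i, (w i : ℂ) • vecMulVec (v i) (star (v i))).IsHermitian := by
  rw [Matrix.IsHermitian, Matrix.conjTranspose_sum]
  refine Finset.sum_congr rfl fun i _ => ?_
  rw [Matrix.conjTranspose_smul, (vecMulVec_hermitian (v i)).eq]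
  congr 1
  simp [Complex.star_def, Complex.conj_ofReal]

lemma psd_sum_smul_outer {ι : Type*} [Fintype ι] (v : ι → n → ℂ) (w : ι → ℝ)
    (hw : ∀ i, 0 ≤ w i) :
    (∑ i, (w i : ℂ) • vecMulVec (v i) (star (v i))).PosSemidef :=
  psd_sum _ _ fun i _ => psd_real_smul (vecMulVec_posSemidef (v i)) (hw i)

lemma trace_sum_smul_outer {ι : Type*} [Fintype ι] [DecidableEq ι] (v : ι → n → ℂ)
    (hvo : ∀ i j, star (v i) ⬝ᵥ v j = if i = j then 1 else 0) (w : ι → ℂ) :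
    (∑ i, w i • vecMulVec (v i) (star (v i))).trace = ∑ i, w i := by
  rw [Matrix.trace_sum]
  refine Finset.sum_congr rfl fun i _ => ?_
  rw [Matrix.trace_smul, trace_vecMulVec, hvo i i, if_pos rfl, smul_eq_mul, mul_one]


lemma matrix_side (a b : n → ℝ) (av bv : n → n → ℂ)
    (hao : ∀ i j, star (av i) ⬝ᵥ av j = if i = j then 1 else 0)
    (hbo : ∀ i j, star (bv i) ⬝ᵥ bv j = if i = j then 1 else 0)
    (hann : ∀ i, 0 ≤ a i) (hbnn : ∀ i, 0 ≤ b i)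
    (ha1 : ∑ i, a i = 1) (hb1 : ∑ i, b i = 1) :
    2 - 2 * (∑ i, ∑ j, Real.sqrt (a i) * Real.sqrt (b j) * ‖star (av i) ⬝ᵥ bv j‖ ^ 2)
      ≤ traceNorm ((∑ i, (a i : ℂ) • vecMulVec (av i) (star (av i)))
          - (∑ j, (b j : ℂ) • vecMulVec (bv j) (star (bv j))))
    ∧ traceNorm ((∑ i, (a i : ℂ) • vecMulVec (av i) (star (av i)))
          - (∑ j, (b j : ℂ) • vecMulVec (bv j) (star (bv j)))) ≤ 2 := by
  obtain ⟨ρ, hρ⟩ : ∃ ρ, ρ = ∑ i, (a i : ℂ) • vecMulVec (av i) (star (av i)) := ⟨_, rfl⟩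
  obtain ⟨σ, hσ⟩ : ∃ σ, σ = ∑ j, (b j : ℂ) • vecMulVec (bv j) (star (bv j)) := ⟨_, rfl⟩
  obtain ⟨A', hA'⟩ : ∃ A', A' = ∑ i, ((Real.sqrt (a i) : ℝ) : ℂ) • vecMulVec (av i) (star (av i)) :=
    ⟨_, rfl⟩
  obtain ⟨B', hB'⟩ : ∃ B', B' = ∑ j, ((Real.sqrt (b j) : ℝ) : ℂ) • vecMulVec (bv j) (star (bv j)) :=
    ⟨_, rfl⟩
  obtain ⟨F, hF⟩ : ∃ F, F = ∑ i, ∑ j, Real.sqrt (a i) * Real.sqrt (b j) *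
      ‖star (av i) ⬝ᵥ bv j‖ ^ 2 := ⟨_, rfl⟩
  rw [← hρ, ← hσ, ← hF]
  -- basic facts
  have hρherm : ρ.IsHermitian := hρ ▸ herm_sum_smul_outer av a
  have hσherm : σ.IsHermitian := hσ ▸ herm_sum_smul_outer bv b
  have hρpsd : ρ.PosSemidef := hρ ▸ psd_sum_smul_outer av a hann
  have hσpsd : σ.PosSemidef := hσ ▸ psd_sum_smul_outer bv b hbnn
  have hA'herm : A'.IsHermitian := hA' ▸ herm_sum_smul_outer av _
  have hB'herm : B'.IsHermitian := hB' ▸ herm_sum_smul_outer bv _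
  have hA'psd : A'.PosSemidef := hA' ▸ psd_sum_smul_outer av _ (fun i => Real.sqrt_nonneg _)
  have hB'psd : B'.PosSemidef := hB' ▸ psd_sum_smul_outer bv _ (fun j => Real.sqrt_nonneg _)
  have hA'2 : A' * A' = ρ := by
    rw [hA', hρ, sum_smul_outer_mul av hao]
    refine Finset.sum_congr rfl fun i _ => ?_
    rw [← Complex.ofReal_mul, Real.mul_self_sqrt (hann i)]
  have hB'2 : B' * B' = σ := by
    rw [hB', hσ, sum_smul_outer_mul bv hbo]
    refine Finset.sum_congr rfl fun j _ => ?_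
    rw [← Complex.ofReal_mul, Real.mul_self_sqrt (hbnn j)]
  have htrρ : ρ.trace = 1 := by
    rw [hρ, trace_sum_smul_outer av hao]
    rw [show (∑ i, ((a i : ℝ) : ℂ)) = ((∑ i, a i : ℝ) : ℂ) by push_cast; rfl, ha1]
    simp
  have htrσ : σ.trace = 1 := by
    rw [hσ, trace_sum_smul_outer bv hbo]
    rw [show (∑ j, ((b j : ℝ) : ℂ)) = ((∑ j, b j : ℝ) : ℂ) by push_cast; rfl, hb1]
    simp
  have htrAB : (A' * B').trace = (F : ℂ) := by
    rw [hA', hB', Finset.sum_mul_sum, Matrix.trace_sum]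
    rw [hF]
    rw [show ((∑ i, ∑ j, Real.sqrt (a i) * Real.sqrt (b j) * ‖star (av i) ⬝ᵥ bv j‖ ^ 2 : ℝ) : ℂ)
      = ∑ i, ∑ j, ((Real.sqrt (a i) * Real.sqrt (b j) * ‖star (av i) ⬝ᵥ bv j‖ ^ 2 : ℝ) : ℂ) by
        push_cast; rfl]
    refine Finset.sum_congr rfl fun i _ => ?_
    rw [Matrix.trace_sum]
    refine Finset.sum_congr rfl fun j _ => ?_
    rw [trace_smul_outer_mul_smul_outer]
    rw [show star (star (av i) ⬝ᵥ bv j) = starRingEnd ℂ (star (av i) ⬝ᵥ bv j) from rfl,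
      Complex.mul_conj, normSq_eq_norm_sq]
    push_cast
    ring
  have hΔherm : (ρ - σ).IsHermitian := hρherm.sub hσherm
  have hTeq : traceNorm (ρ - σ) = ∑ k, |hΔherm.eigenvalues k| := traceNorm_herm hΔherm
  have hVd : star hΔherm.eigenvectorUnitary.1 * hΔherm.eigenvectorUnitary.1 = 1 :=
    star_V_mul_V hΔherm
  have hVd1 : hΔherm.eigenvectorUnitary.1 * star hΔherm.eigenvectorUnitary.1 = 1 :=
    mul_eq_one_comm.mp hVd
  -- upper bound : traceNorm (ρ - σ) ≤ 2
  have hTle : traceNorm (ρ - σ) ≤ 2 := by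
    obtain ⟨sg, hsgdef⟩ : ∃ sg : n → ℝ,
        sg = fun k => if hΔherm.eigenvalues k < 0 then (-1 : ℝ) else 1 := ⟨_, rfl⟩
    have hsg : ∀ k, |sg k| ≤ 1 := by
      intro k; rw [hsgdef]; dsimp only
      split <;> simp
    have hsgmul : ∀ k, sg k * hΔherm.eigenvalues k = |hΔherm.eigenvalues k| := by
      intro k; rw [hsgdef]; dsimp only
      rcases lt_or_ge (hΔherm.eigenvalues k) 0 with h | h
      · rw [if_pos h, abs_of_neg h]; ring
      · rw [if_neg (not_lt.mpr h), abs_of_nonneg h]; ring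
    obtain ⟨U', hU'⟩ : ∃ U', U' = hΔherm.eigenvectorUnitary.1 *
        diagonal (fun k => (sg k : ℂ)) * star hΔherm.eigenvectorUnitary.1 := ⟨_, rfl⟩
    have htrU'Δ : ((U' * (ρ - σ)).trace).re = ∑ k, |hΔherm.eigenvalues k| := by
      conv_lhs => rw [spectral' hΔherm, hU']
      rw [conj_mul_conj _ _ _ hVd, trace_conj _ _ hVd, diagonal_mul_diagonal, trace_diagonal,
        Complex.re_sum]
      refine Finset.sum_congr rfl fun k _ => ?_
      rw [← Complex.ofReal_mul, Complex.ofReal_re, hsgmul k]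
    have hbρ := key_bound_psd hρpsd hΔherm.eigenvectorUnitary.1 hVd1 sg hsg
    have hbσ := key_bound_psd hσpsd hΔherm.eigenvectorUnitary.1 hVd1 sg hsg
    rw [htrρ, Complex.one_re] at hbρ
    rw [htrσ, Complex.one_re] at hbσ
    have hsplit : (U' * (ρ - σ)).trace = (U' * ρ).trace - (U' * σ).trace := by
      rw [mul_sub, Matrix.trace_sub]
    rw [hTeq, ← htrU'Δ, hsplit, Complex.sub_re, ← hU'] at *
    rw [← hU'] at hbρ hbσ
    have h1 := abs_le.mp hbρ
    have h2 := abs_le.mp hbσ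
    linarith [h1.2, h2.1]
  refine ⟨?_, hTle⟩
  -- lower bound : Powers-Stormer
  obtain ⟨C, hC⟩ : ∃ C, C = A' - B' := ⟨_, rfl⟩
  have hCherm : C.IsHermitian := hC ▸ hA'herm.sub hB'herm
  obtain ⟨W, μ, hWa, hWb, hdiagC⟩ : ∃ (W : Matrix n n ℂ) (μ : n → ℝ),
      star W * W = 1 ∧ W * star W = 1 ∧
      star W * C * W = diagonal (fun k => (μ k : ℂ)) :=
    ⟨_, _, star_V_mul_V hCherm, mul_eq_one_comm.mp (star_V_mul_V hCherm), diag_conj_eq hCherm⟩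
  have hspecC : C = W * diagonal (fun k => (μ k : ℂ)) * star W := by
    rw [← hdiagC,
      show W * (star W * C * W) * star W = (W * star W) * C * (W * star W) by
        simp only [Matrix.mul_assoc],
      hWb, Matrix.one_mul, Matrix.mul_one]
  obtain ⟨sg, hsgdef⟩ : ∃ sg : n → ℝ, sg = fun k => if μ k < 0 then (-1 : ℝ) else 1 := ⟨_, rfl⟩
  have hsg : ∀ k, |sg k| ≤ 1 := by
    intro k; rw [hsgdef]; dsimp only
    split <;> simp
  have hsgmul : ∀ k, sg k * μ k = |μ k| := by
    intro k; rw [hsgdef]; dsimp only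
    rcases lt_or_ge (μ k) 0 with h | h
    · rw [if_pos h, abs_of_neg h]; ring
    · rw [if_neg (not_lt.mpr h), abs_of_nonneg h]; ring
  obtain ⟨U', hU'⟩ : ∃ U', U' = W * diagonal (fun k => (sg k : ℂ)) * star W := ⟨_, rfl⟩
  obtain ⟨absC, habsC⟩ : ∃ absC,
      absC = W * diagonal (fun k => ((|μ k| : ℝ) : ℂ)) * star W := ⟨_, rfl⟩
  have k1 : ((U' * (ρ - σ)).trace).re ≤ ∑ k, |hΔherm.eigenvalues k| := by
    rw [hU']
    exact key_bound hΔherm _ hWb sg hsg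
  have hU'C : U' * C = absC := by
    conv_lhs => rw [hspecC, hU']
    rw [conj_mul_conj _ _ _ hWa, habsC, diagonal_mul_diagonal]
    congr 2
    exact congrArg diagonal (funext fun k => by rw [← Complex.ofReal_mul, hsgmul k])
  have hCU' : C * U' = absC := by
    conv_lhs => rw [hspecC, hU']
    rw [conj_mul_conj _ _ _ hWa, habsC, diagonal_mul_diagonal]
    congr 2
    exact congrArg diagonal (funext fun k => by rw [← Complex.ofReal_mul, mul_comm, hsgmul k])
  have k2 : (U' * (ρ - σ)).trace = (absC * (A' + B')).trace := by
    have hsplit : (ρ - σ) + (ρ - σ) = C * (A' + B') + (A' + B') * C := by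
      rw [← hA'2, ← hB'2, hC]
      noncomm_ring
    have h2 : (U' * (ρ - σ)).trace + (U' * (ρ - σ)).trace
        = (absC * (A' + B')).trace + (absC * (A' + B')).trace := by
      rw [← Matrix.trace_add, ← mul_add, hsplit, mul_add, Matrix.trace_add]
      congr 1
      · rw [← Matrix.mul_assoc, hU'C]
      · rw [Matrix.trace_mul_comm, Matrix.mul_assoc, hCU', Matrix.trace_mul_comm]
    have h3 : (2 : ℂ) * (U' * (ρ - σ)).trace = 2 * (absC * (A' + B')).trace := by
      rw [two_mul, two_mul, h2]
    exact mul_left_cancel₀ two_ne_zero h3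
  have k3 : 2 - 2 * F ≤ ((absC * (A' + B')).trace).re := by
    have hstep : (absC * (A' + B')).trace
        = ∑ k, ((|μ k| : ℝ) : ℂ) * ((star W * ((A' + B') * W)) k k) := by
      rw [habsC,
        show (W * diagonal (fun k => ((|μ k| : ℝ) : ℂ)) * star W) * (A' + B')
          = W * (diagonal (fun k => ((|μ k| : ℝ) : ℂ)) * (star W * (A' + B'))) by
            simp only [Matrix.mul_assoc],
        Matrix.trace_mul_comm,
        show (diagonal (fun k => ((|μ k| : ℝ) : ℂ)) * (star W * (A' + B'))) * W
          = diagonal (fun k => ((|μ k| : ℝ) : ℂ)) * (star W * ((A' + B') * W)) by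
            simp only [Matrix.mul_assoc],
        trace_diag_mul]
    have hGA : (star W * A' * W).PosSemidef := by
      have := hA'psd.conjTranspose_mul_mul_same W
      simpa [Matrix.star_eq_conjTranspose] using this
    have hGB : (star W * B' * W).PosSemidef := by
      have := hB'psd.conjTranspose_mul_mul_same W
      simpa [Matrix.star_eq_conjTranspose] using this
    have hdiag : star W * A' * W - star W * B' * W = diagonal (fun k => (μ k : ℂ)) := by
      rw [← hdiagC, hC]
      noncomm_ring
    have hμre : ∀ k, ((star W * A' * W) k k).re - ((star W * B' * W) k k).re = μ k := by
      intro k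
      have h1 := congrFun (congrFun hdiag k) k
      rw [Matrix.sub_apply] at h1
      have h2 := congrArg Complex.re h1
      rw [Complex.sub_re] at h2
      rw [h2, diagonal_apply_eq, Complex.ofReal_re]
    have hGsum : ∀ k, ((star W * ((A' + B') * W)) k k).re
        = ((star W * A' * W) k k).re + ((star W * B' * W) k k).re := by
      intro k
      rw [show star W * ((A' + B') * W) = star W * A' * W + star W * B' * W by
        rw [add_mul, mul_add]; simp only [Matrix.mul_assoc], Matrix.add_apply, Complex.add_re]
    have hlower : ∀ k, |μ k| ≤ ((star W * ((A' + B') * W)) k k).re := by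
      intro k
      rw [hGsum k]
      have h1 := psd_diag_re_nonneg hGA k
      have h2 := psd_diag_re_nonneg hGB k
      have h3 := hμre k
      refine abs_le.mpr ⟨by linarith, by linarith⟩
    have htrCC1 : (C * C).trace = ∑ k, ((μ k : ℂ) * (μ k : ℂ)) := by
      conv_lhs => rw [hspecC]
      rw [conj_mul_conj _ _ _ hWa, trace_conj _ _ hWa, diagonal_mul_diagonal, trace_diagonal]
    have htrCC2 : (C * C).trace = 2 - 2 * (F : ℂ) := by
      have hCC : C * C = ρ + σ - (A' * B' + B' * A') := by
        rw [hC, ← hA'2, ← hB'2]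
        noncomm_ring
      rw [hCC, Matrix.trace_sub, Matrix.trace_add, Matrix.trace_add, htrρ, htrσ,
        Matrix.trace_mul_comm B' A', htrAB]
      ring
    have hsumsq : ∑ k, μ k * μ k = 2 - 2 * F := by
      have h1 := htrCC1.symm.trans htrCC2
      have h2 := congrArg Complex.re h1
      rw [Complex.re_sum] at h2
      rw [show ∑ k, ((μ k : ℂ) * (μ k : ℂ)).re = ∑ k, μ k * μ k from
        Finset.sum_congr rfl fun k _ => by rw [← Complex.ofReal_mul, Complex.ofReal_re]] at h2
      rw [h2]
      simp
    rw [hstep, Complex.re_sum,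
      show ∑ k, (((|μ k| : ℝ) : ℂ) * ((star W * ((A' + B') * W)) k k)).re
        = ∑ k, |μ k| * ((star W * ((A' + B') * W)) k k).re from
        Finset.sum_congr rfl fun k _ => Complex.re_ofReal_mul _ _,
      ← hsumsq]
    refine Finset.sum_le_sum fun k _ => ?_
    rw [← abs_mul_abs_self (μ k)]
    exact mul_le_mul_of_nonneg_left (hlower k) (abs_nonneg _)
  rw [hTeq]
  calc 2 - 2 * F ≤ ((absC * (A' + B')).trace).re := k3
    _ = ((U' * (ρ - σ)).trace).re := by rw [k2]
    _ ≤ ∑ k, |hΔherm.eigenvalues k| := k1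


lemma norm_dot_swap (u v : n → ℂ) : ‖star u ⬝ᵥ v‖ = ‖star v ⬝ᵥ u‖ := by
  rw [star_dotProduct_comm v u, norm_star]

lemma marg_one (v w : n → n → ℂ)
    (hv : ∀ i j, star (v i) ⬝ᵥ v j = if i = j then 1 else 0)
    (hw : ∀ i j, star (w i) ⬝ᵥ w j = if i = j then 1 else 0) (i : n) :
    ∑ j, ‖star (v i) ⬝ᵥ w j‖ ^ 2 = 1 := by
  have hWmat : (Matrix.of fun j k => w j k) * (Matrix.of fun j k => w j k)ᴴ = 1 := by
    ext j j'
    simp only [Matrix.mul_apply, Matrix.conjTranspose_apply, Matrix.of_apply, Matrix.one_apply]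
    have h := hw j' j
    simp only [dotProduct, Pi.star_apply] at h
    rw [show ∑ k, w j k * star (w j' k) = ∑ k, star (w j' k) * w j k from
      Finset.sum_congr rfl fun k _ => mul_comm _ _, h]
    by_cases hjj : j = j' <;> simp [hjj, eq_comm]
  have hW2 := mul_eq_one_comm.mp hWmat
  have horth : ∀ k l, (∑ j, w j k * star (w j l)) = if k = l then 1 else 0 := by
    intro k l
    have h1 := congrFun (congrFun hW2 k) l
    simp only [Matrix.mul_apply, Matrix.conjTranspose_apply, Matrix.of_apply,
      Matrix.one_apply] at h1
    have h2 := congrArg (starRingEnd ℂ) h1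
    rw [map_sum] at h2
    simp only [Complex.star_def, _root_.map_mul, Complex.conj_conj, apply_ite (starRingEnd ℂ),
      _root_.map_one, _root_.map_zero] at h2
    simpa only [Complex.star_def] using h2
  have key : (∑ j, ((‖star (v i) ⬝ᵥ w j‖ ^ 2 : ℝ) : ℂ)) = 1 := by
    have h1 : ∀ j, ((‖star (v i) ⬝ᵥ w j‖ ^ 2 : ℝ) : ℂ)
        = ∑ k, ∑ l, ((starRingEnd ℂ) (v i k) * w j k) * (v i l * (starRingEnd ℂ) (w j l)) := by
      intro j
      rw [show ((‖star (v i) ⬝ᵥ w j‖ ^ 2 : ℝ) : ℂ)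
          = (star (v i) ⬝ᵥ w j) * (starRingEnd ℂ) (star (v i) ⬝ᵥ w j) by
        rw [Complex.mul_conj, normSq_eq_norm_sq]]
      rw [dotProduct, map_sum, Finset.sum_mul_sum]
      refine Finset.sum_congr rfl fun k _ => Finset.sum_congr rfl fun l _ => ?_
      simp only [Pi.star_apply, Complex.star_def, _root_.map_mul, Complex.conj_conj]
    rw [Finset.sum_congr rfl fun j _ => h1 j]
    rw [Finset.sum_comm]
    have h3 : ∀ k, (∑ j, ∑ l, ((starRingEnd ℂ) (v i k) * w j k) * (v i l * (starRingEnd ℂ) (w j l)))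
        = (starRingEnd ℂ) (v i k) * v i k := by
      intro k
      rw [Finset.sum_comm]
      have e1 : ∀ l, (∑ j, ((starRingEnd ℂ) (v i k) * w j k) * (v i l * (starRingEnd ℂ) (w j l)))
          = ((starRingEnd ℂ) (v i k) * v i l) * (∑ j, w j k * star (w j l)) := by
        intro l
        rw [Finset.mul_sum]
        refine Finset.sum_congr rfl fun j _ => ?_
        rw [show (star (w j l) : ℂ) = (starRingEnd ℂ) (w j l) from rfl]
        ring
      calc (∑ l, ∑ j, ((starRingEnd ℂ) (v i k) * w j k) * (v i l * (starRingEnd ℂ) (w j l)))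
          = ∑ l, ((starRingEnd ℂ) (v i k) * v i l) * (∑ j, w j k * star (w j l)) :=
            Finset.sum_congr rfl fun l _ => e1 l
        _ = ∑ l, ((starRingEnd ℂ) (v i k) * v i l) * (if k = l then 1 else 0) :=
            Finset.sum_congr rfl fun l _ => by rw [horth k l]
        _ = (starRingEnd ℂ) (v i k) * v i k := by simp
    rw [Finset.sum_congr rfl fun k _ => h3 k]
    have h4 := hv i i
    simp only [dotProduct, Pi.star_apply, if_pos rfl, ↓reduceIte] at h4
    simpa only [Complex.star_def] using h4
  exact_mod_cast key


lemma classical_side (a b : n → ℝ) (c : n → n → ℝ) (T F : ℝ)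
    (hann : ∀ i, 0 ≤ a i) (hbnn : ∀ i, 0 ≤ b i)
    (ha1 : ∑ i, a i = 1) (hb1 : ∑ i, b i = 1)
    (hcnn : ∀ i j, 0 ≤ c i j)
    (h1 : ∀ i, ∑ j, c i j = 1) (h2 : ∀ j, ∑ i, c i j = 1)
    (hF : F = ∑ i, ∑ j, Real.sqrt (a i) * Real.sqrt (b j) * c i j)
    (hlow : 2 - 2 * F ≤ T) (hup : T ≤ 2) :
    1 - Real.sqrt (T - T ^ 2 / 4) ≤ ∑ i, ∑ j, min (a i) (b j) * c i j := by
  obtain ⟨D, hD⟩ : ∃ D, D = ∑ p : n × n, |a p.1 - b p.2| * c p.1 p.2 := ⟨_, rfl⟩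
  have hsaP : ∑ p : n × n, a p.1 * c p.1 p.2 = 1 := by
    rw [Fintype.sum_prod_type]
    calc ∑ i, ∑ j, a i * c i j = ∑ i, a i * ∑ j, c i j :=
          Finset.sum_congr rfl fun i _ => (Finset.mul_sum _ _ _).symm
      _ = ∑ i, a i := Finset.sum_congr rfl fun i _ => by rw [h1 i, mul_one]
      _ = 1 := ha1
  have hsbP : ∑ p : n × n, b p.2 * c p.1 p.2 = 1 := by
    rw [Fintype.sum_prod_type, Finset.sum_comm]
    calc ∑ j, ∑ i, b j * c i j = ∑ j, b j * ∑ i, c i j :=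
          Finset.sum_congr rfl fun j _ => (Finset.mul_sum _ _ _).symm
      _ = ∑ j, b j := Finset.sum_congr rfl fun j _ => by rw [h2 j, mul_one]
      _ = 1 := hb1
  have hFP : ∑ p : n × n, Real.sqrt (a p.1) * Real.sqrt (b p.2) * c p.1 p.2 = F := by
    rw [hF, Fintype.sum_prod_type]
  have hF0 : 0 ≤ F := by
    rw [hF]
    refine Finset.sum_nonneg fun i _ => Finset.sum_nonneg fun j _ => ?_
    have := hcnn i j
    positivity
  have hD0 : 0 ≤ D := by
    rw [hD]
    refine Finset.sum_nonneg fun p _ => mul_nonneg (abs_nonneg _) (hcnn _ _)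
  have hf2 : ∑ p : n × n, (|Real.sqrt (a p.1) - Real.sqrt (b p.2)| * Real.sqrt (c p.1 p.2)) ^ 2
      = 2 - 2 * F := by
    have e : ∀ p : n × n, (|Real.sqrt (a p.1) - Real.sqrt (b p.2)| * Real.sqrt (c p.1 p.2)) ^ 2
        = (a p.1 * c p.1 p.2 + b p.2 * c p.1 p.2)
          - 2 * (Real.sqrt (a p.1) * Real.sqrt (b p.2) * c p.1 p.2) := by
      intro p
      rw [mul_pow, sq_abs, Real.sq_sqrt (hcnn _ _)]
      have hx := Real.mul_self_sqrt (hann p.1)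
      have hy := Real.mul_self_sqrt (hbnn p.2)
      linear_combination (c p.1 p.2) * hx + (c p.1 p.2) * hy
    rw [Finset.sum_congr rfl fun p _ => e p, Finset.sum_sub_distrib, Finset.sum_add_distrib,
      hsaP, hsbP, ← Finset.mul_sum, hFP]
    ring
  have hg2 : ∑ p : n × n, ((Real.sqrt (a p.1) + Real.sqrt (b p.2)) * Real.sqrt (c p.1 p.2)) ^ 2
      = 2 + 2 * F := by
    have e : ∀ p : n × n, ((Real.sqrt (a p.1) + Real.sqrt (b p.2)) * Real.sqrt (c p.1 p.2)) ^ 2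
        = (a p.1 * c p.1 p.2 + b p.2 * c p.1 p.2)
          + 2 * (Real.sqrt (a p.1) * Real.sqrt (b p.2) * c p.1 p.2) := by
      intro p
      rw [mul_pow, Real.sq_sqrt (hcnn _ _)]
      have hx := Real.mul_self_sqrt (hann p.1)
      have hy := Real.mul_self_sqrt (hbnn p.2)
      linear_combination (c p.1 p.2) * hx + (c p.1 p.2) * hy
    rw [Finset.sum_congr rfl fun p _ => e p, Finset.sum_add_distrib, Finset.sum_add_distrib,
      hsaP, hsbP, ← Finset.mul_sum, hFP]
    ring
  have hfgD : ∑ p : n × n, (|Real.sqrt (a p.1) - Real.sqrt (b p.2)| * Real.sqrt (c p.1 p.2))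
      * ((Real.sqrt (a p.1) + Real.sqrt (b p.2)) * Real.sqrt (c p.1 p.2)) = D := by
    rw [hD]
    refine Finset.sum_congr rfl fun p _ => ?_
    have hx := Real.mul_self_sqrt (hann p.1)
    have hy := Real.mul_self_sqrt (hbnn p.2)
    have hc := Real.mul_self_sqrt (hcnn p.1 p.2)
    have habs : |Real.sqrt (a p.1) - Real.sqrt (b p.2)| * (Real.sqrt (a p.1) + Real.sqrt (b p.2))
        = |a p.1 - b p.2| := by
      rw [show (Real.sqrt (a p.1) + Real.sqrt (b p.2))
          = |Real.sqrt (a p.1) + Real.sqrt (b p.2)| from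
        (abs_of_nonneg (by positivity)).symm, ← abs_mul]
      congr 1
      linear_combination hx - hy
    calc (|Real.sqrt (a p.1) - Real.sqrt (b p.2)| * Real.sqrt (c p.1 p.2))
        * ((Real.sqrt (a p.1) + Real.sqrt (b p.2)) * Real.sqrt (c p.1 p.2))
        = (|Real.sqrt (a p.1) - Real.sqrt (b p.2)| * (Real.sqrt (a p.1) + Real.sqrt (b p.2)))
          * (Real.sqrt (c p.1 p.2) * Real.sqrt (c p.1 p.2)) := by ring
      _ = |a p.1 - b p.2| * c p.1 p.2 := by rw [habs, hc]
  have hCS := Finset.sum_mul_sq_le_sq_mul_sq Finset.univ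
    (fun p : n × n => |Real.sqrt (a p.1) - Real.sqrt (b p.2)| * Real.sqrt (c p.1 p.2))
    (fun p : n × n => (Real.sqrt (a p.1) + Real.sqrt (b p.2)) * Real.sqrt (c p.1 p.2))
  rw [hfgD, hf2, hg2] at hCS
  have hminD : ∑ i, ∑ j, min (a i) (b j) * c i j = 1 - D / 2 := by
    have e : ∀ p : n × n, min (a p.1) (b p.2) * c p.1 p.2
        = ((a p.1 * c p.1 p.2 + b p.2 * c p.1 p.2) - |a p.1 - b p.2| * c p.1 p.2) / 2 := by
      intro p
      rcases le_total (a p.1) (b p.2) with h | h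
      · rw [min_eq_left h, abs_of_nonpos (by linarith)]; ring
      · rw [min_eq_right h, abs_of_nonneg (by linarith)]; ring
    have hP : ∑ p : n × n, min (a p.1) (b p.2) * c p.1 p.2 = 1 - D / 2 := by
      rw [Finset.sum_congr rfl fun p _ => e p, ← Finset.sum_div,
        Finset.sum_sub_distrib, Finset.sum_add_distrib, hsaP, hsbP, ← hD]
      ring
    rw [Fintype.sum_prod_type] at hP
    simpa using hP
  have hsq : (1 - T / 2) ^ 2 ≤ F ^ 2 := sq_le_sq' (by linarith) (by linarith)
  have hDT : (D / 2) ^ 2 ≤ T - T ^ 2 / 4 := by nlinarith [hCS, hsq]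
  have hD2 : D / 2 ≤ Real.sqrt (T - T ^ 2 / 4) := by
    have h := Real.sqrt_le_sqrt hDT
    rwa [Real.sqrt_sq (by positivity)] at h
  rw [hminD]
  linarith

end S16

/-- Σ_{i,j} min(aᵢ,bⱼ)|⟨aᵢ|bⱼ⟩|² ≥ 1 − √(‖ρ−σ‖₁ − ¼‖ρ−σ‖₁²). -/
theorem stmt16 {N : ℕ} (ρ σ : Matrix (Fin N) (Fin N) ℂ)
    (a b : Fin N → ℝ) (av bv : Fin N → (Fin N → ℂ))
    (hao : ∀ i j, star (av i) ⬝ᵥ av j = if i = j then 1 else 0)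
    (hbo : ∀ i j, star (bv i) ⬝ᵥ bv j = if i = j then 1 else 0)
    (hann : ∀ i, 0 ≤ a i) (hbnn : ∀ i, 0 ≤ b i)
    (ha1 : ∑ i, a i = 1) (hb1 : ∑ i, b i = 1)
    (hρ : ρ = ∑ i, (a i : ℂ) • Matrix.vecMulVec (av i) (star (av i)))
    (hσ : σ = ∑ j, (b j : ℂ) • Matrix.vecMulVec (bv j) (star (bv j))) :
    1 - Real.sqrt (traceNorm (ρ - σ) - traceNorm (ρ - σ) ^ 2 / 4)
      ≤ ∑ i, ∑ j, min (a i) (b j) * ‖star (av i) ⬝ᵥ bv j‖ ^ 2 := by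
  subst hρ hσ
  obtain ⟨hlow, hup⟩ := S16.matrix_side a b av bv hao hbo hann hbnn ha1 hb1
  exact S16.classical_side a b (fun i j => ‖star (av i) ⬝ᵥ bv j‖ ^ 2) _ _
    hann hbnn ha1 hb1 (fun i j => by positivity)
    (fun i => S16.marg_one av bv hao hbo i)
    (fun j => by
      have h := S16.marg_one bv av hbo hao j
      calc ∑ i, ‖star (av i) ⬝ᵥ bv j‖ ^ 2 = ∑ i, ‖star (bv j) ⬝ᵥ av i‖ ^ 2 :=
            Finset.sum_congr rfl fun i _ => by rw [S16.norm_dot_swap]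
        _ = 1 := h)
    rfl hlow hup
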